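/- arXiv:2504.05067 — 2 statements merged into one kernel-verified Lean document; each statement's English description precedes it below -/
import Mathlib

section
/- Let z, z̄ ∈ ℂ and let γ, γ̄ > 0 be real. Then ln(1 + |z|²/γ) ≥ ln(1 + |z̄|²/γ̄) − |z̄|²/γ̄ + 2·Re(z̄* · z)/γ̄ − (1/γ̄ − 1/(γ̄ + |z̄|²))·(|z|² + γ), with equality when z = z̄ and γ = γ̄. -/
lemma key_alg (s sb γ γbar : ℝ) (hγ : 0 < γ) (hγb : 0 < γbar) :
    1 - (1 + sb ^ 2 / γbar) / (1 + s ^ 2 / γ) -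
      (-(sb ^ 2 / γbar) + 2 * sb * s / γbar -
        (1 / γbar - 1 / (γbar + sb ^ 2)) * (s ^ 2 + γ)) =
    (s * (γbar + sb ^ 2) - sb * (γ + s ^ 2)) ^ 2 /
      (γbar * (γ + s ^ 2) * (γbar + sb ^ 2)) := by
  have h1 : (0:ℝ) < γ + s ^ 2 := by positivity
  have h2 : (0:ℝ) < γbar + sb ^ 2 := by positivity
  have h3 : (0:ℝ) < 1 + s ^ 2 / γ := by positivity
  field_simp
  ring

/-- Inequality (71) of the paper (scalar form, inequality (48) of Nasir–Tuan–Ngo–Duong):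
the concave lower bound of `ln(1 + |z|²/γ)` around the point `(z̄, γ̄)`, with equality
at `z = z̄`, `γ = γ̄`. -/
theorem log_one_add_ratio_lower_bound (z zbar : ℂ) (γ γbar : ℝ)
    (hγ : 0 < γ) (hγbar : 0 < γbar) :
    Real.log (1 + ‖z‖ ^ 2 / γ) ≥
        Real.log (1 + ‖zbar‖ ^ 2 / γbar) - ‖zbar‖ ^ 2 / γbar +
          2 * ((starRingEnd ℂ zbar) * z).re / γbar -
          (1 / γbar - 1 / (γbar + ‖zbar‖ ^ 2)) * (‖z‖ ^ 2 + γ) ∧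
      (z = zbar → γ = γbar →
        Real.log (1 + ‖z‖ ^ 2 / γ) =
          Real.log (1 + ‖zbar‖ ^ 2 / γbar) - ‖zbar‖ ^ 2 / γbar +
            2 * ((starRingEnd ℂ zbar) * z).re / γbar -
            (1 / γbar - 1 / (γbar + ‖zbar‖ ^ 2)) * (‖z‖ ^ 2 + γ)) := by
  set s := ‖z‖ with hs
  set sb := ‖zbar‖ with hsb
  have hs0 : 0 ≤ s := hs ▸ norm_nonneg z
  have hsb0 : 0 ≤ sb := hsb ▸ norm_nonneg zbar
  clear_value s sb
  have hA : (0:ℝ) < 1 + s ^ 2 / γ := by positivity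
  have hB : (0:ℝ) < 1 + sb ^ 2 / γbar := by positivity
  have hQ : (0:ℝ) < γbar + sb ^ 2 := by positivity
  constructor
  · -- the inequality
    have hre : ((starRingEnd ℂ zbar) * z).re ≤ sb * s := by
      calc ((starRingEnd ℂ zbar) * z).re ≤ ‖(starRingEnd ℂ zbar) * z‖ :=
            Complex.re_le_norm _
        _ = sb * s := by rw [norm_mul, Complex.norm_conj, ← hs, ← hsb]
    have hre' : 2 * ((starRingEnd ℂ zbar) * z).re / γbar ≤ 2 * sb * s / γbar := by
      rw [mul_assoc]; gcongr
    have hlog : Real.log (1 + s ^ 2 / γ) - Real.log (1 + sb ^ 2 / γbar) ≥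
        1 - (1 + sb ^ 2 / γbar) / (1 + s ^ 2 / γ) := by
      have h := Real.log_le_sub_one_of_pos (show (0:ℝ) < (1 + sb ^ 2 / γbar) / (1 + s ^ 2 / γ)
        from by positivity)
      rw [Real.log_div hB.ne' hA.ne'] at h
      linarith
    have halg := key_alg s sb γ γbar hγ hγbar
    have hsq : (0:ℝ) ≤ (s * (γbar + sb ^ 2) - sb * (γ + s ^ 2)) ^ 2 /
        (γbar * (γ + s ^ 2) * (γbar + sb ^ 2)) := by positivity
    have h2 : 1 - (1 + sb ^ 2 / γbar) / (1 + s ^ 2 / γ) ≥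
        -(sb ^ 2 / γbar) + 2 * sb * s / γbar -
          (1 / γbar - 1 / (γbar + sb ^ 2)) * (s ^ 2 + γ) := by linarith
    rw [ge_iff_le, ← sub_nonneg] at h2 hlog ⊢
    generalize hD : (1 + sb ^ 2 / γbar) / (1 + s ^ 2 / γ) = D at h2 hlog
    linarith
  · -- equality case
    intro h1 h2
    subst h1; subst h2; subst hs; subst hsb
    have hconj : ((starRingEnd ℂ z) * z).re = ‖z‖ ^ 2 := by
      rw [mul_comm, Complex.mul_conj, Complex.ofReal_re, Complex.normSq_eq_norm_sq]
    rw [hconj]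
    have h3 : (1 / γ - 1 / (γ + ‖z‖ ^ 2)) *
        (‖z‖ ^ 2 + γ) = ‖z‖ ^ 2 / γ := by
      have h4 : (0:ℝ) < γ + ‖z‖ ^ 2 := by positivity
      field_simp
      ring
    rw [h3]
    ring
end

section
/- Let z₁,…,z_l ∈ ℂ and z̄₁,…,z̄_l ∈ ℂ. Then ln(1 + Σᵢ|zᵢ|²) ≥ ln(1 + Σᵢ|z̄ᵢ|²) − Σᵢ|z̄ᵢ|² + 2·Σᵢ Re(z̄ᵢ* · zᵢ) − (Σᵢ|z̄ᵢ|²)·(1 + Σᵢ|zᵢ|²)/(1 + Σᵢ|z̄ᵢ|²), with equality when zᵢ = z̄ᵢ for all i. -/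
open Finset

/-- Inequality (72) of the paper (Lemma 2 of Niu et al.): a global lower bound on
`ln(1 + Σᵢ |zᵢ|²)` around the fixed point `(z̄₁, …, z̄_l)`, with equality when
`zᵢ = z̄ᵢ` for all `i`. -/
theorem log_one_add_sum_sq_lower_bound (l : ℕ) (z zbar : Fin l → ℂ) :
    Real.log (1 + ∑ i, ‖z i‖ ^ 2) ≥
        Real.log (1 + ∑ i, ‖zbar i‖ ^ 2) - ∑ i, ‖zbar i‖ ^ 2 +
          2 * ∑ i, ((starRingEnd ℂ (zbar i)) * z i).re -
          (∑ i, ‖zbar i‖ ^ 2) * (1 + ∑ i, ‖z i‖ ^ 2) /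
            (1 + ∑ i, ‖zbar i‖ ^ 2) ∧
      (z = zbar →
        Real.log (1 + ∑ i, ‖z i‖ ^ 2) =
          Real.log (1 + ∑ i, ‖zbar i‖ ^ 2) - ∑ i, ‖zbar i‖ ^ 2 +
            2 * ∑ i, ((starRingEnd ℂ (zbar i)) * z i).re -
            (∑ i, ‖zbar i‖ ^ 2) * (1 + ∑ i, ‖z i‖ ^ 2) /
              (1 + ∑ i, ‖zbar i‖ ^ 2)) := by
  set S := ∑ i, ‖z i‖ ^ 2 with hSdef
  set Sb := ∑ i, ‖zbar i‖ ^ 2 with hSbdef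
  set T := ∑ i, ((starRingEnd ℂ (zbar i)) * z i).re with hTdef
  have hS0 : 0 ≤ S := Finset.sum_nonneg fun i _ => by positivity
  have hSb0 : 0 ≤ Sb := Finset.sum_nonneg fun i _ => by positivity
  have hA : (0:ℝ) < 1 + S := by linarith
  have hB : (0:ℝ) < 1 + Sb := by linarith
  constructor
  · -- key summed inequality
    have hsum : 2 * T * ((1 + S) * (1 + Sb)) ≤ Sb * (1 + S) ^ 2 + S * (1 + Sb) ^ 2 := by
      have hterm : ∀ i ∈ Finset.univ (α := Fin l),
          2 * ((starRingEnd ℂ (zbar i)) * z i).re * ((1 + S) * (1 + Sb)) ≤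
            ‖zbar i‖ ^ 2 * (1 + S) ^ 2 + ‖z i‖ ^ 2 * (1 + Sb) ^ 2 := by
        intro i _
        have h1 : ((starRingEnd ℂ (zbar i)) * z i).re ≤
            ‖zbar i‖ * ‖z i‖ := by
          calc ((starRingEnd ℂ (zbar i)) * z i).re
              ≤ ‖(starRingEnd ℂ (zbar i)) * z i‖ := Complex.re_le_norm _
            _ = ‖zbar i‖ * ‖z i‖ := by
                rw [norm_mul, Complex.norm_conj]
        nlinarith [sq_nonneg (‖zbar i‖ * (1 + S) - ‖z i‖ * (1 + Sb)),
          mul_pos hA hB, norm_nonneg (zbar i), norm_nonneg (z i)]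
      calc 2 * T * ((1 + S) * (1 + Sb))
          = ∑ i, 2 * ((starRingEnd ℂ (zbar i)) * z i).re * ((1 + S) * (1 + Sb)) := by
            rw [hTdef, Finset.mul_sum, Finset.sum_mul]
        _ ≤ ∑ i, (‖zbar i‖ ^ 2 * (1 + S) ^ 2 + ‖z i‖ ^ 2 * (1 + Sb) ^ 2) :=
            Finset.sum_le_sum hterm
        _ = Sb * (1 + S) ^ 2 + S * (1 + Sb) ^ 2 := by
            rw [Finset.sum_add_distrib, ← Finset.sum_mul, ← Finset.sum_mul]
    -- log concavity
    have hlog : Real.log (1 + Sb) - Real.log (1 + S) ≤ (Sb - S) / (1 + S) := by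
      have h := Real.log_le_sub_one_of_pos (div_pos hB hA)
      rw [Real.log_div hB.ne' hA.ne'] at h
      have : (1 + Sb) / (1 + S) - 1 = (Sb - S) / (1 + S) := by field_simp; ring
      linarith [this ▸ h]
    -- combine
    have hDE : Sb + Sb * (1 + S) / (1 + Sb) - (Sb - S) / (1 + S)
        = (Sb * (1 + S) ^ 2 + S * (1 + Sb) ^ 2) / ((1 + S) * (1 + Sb)) := by
      field_simp
      ring
    have h2T : 2 * T ≤ Sb + Sb * (1 + S) / (1 + Sb) - (Sb - S) / (1 + S) := by
      rw [hDE, le_div_iff₀ (mul_pos hA hB)]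
      exact hsum
    linarith
  · intro hz
    subst hz
    have hTS : T = S := by
      rw [hTdef, hSdef]
      refine Finset.sum_congr rfl fun i _ => ?_
      rw [Complex.conj_mul', ← Complex.ofReal_pow, Complex.ofReal_re]
    have hSS : S = Sb := rfl
    rw [hTS, hSS, mul_div_assoc, div_self hB.ne', mul_one]
    ring
end
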